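/- Let (U, V) be an invertible n×n matrix with UᵀV = 0, S = VVᵀ, and F = S^n_+ ∩ S^⊥ = U S^d_+ Uᵀ where U has d columns. A matrix X = (U,V) [[W, Z],[Zᵀ, R]] (U,V)ᵀ with W ∈ S^d_+ belongs to S^n_+ + span(S) if and only if null(W) ⊆ null(Zᵀ). -/

import Mathlib

open Matrix

private lemma exists_comp_of_ker_le_ker {K V₁ V₂ V₃ : Type*} [Field K]
    [AddCommGroup V₁] [AddCommGroup V₂] [AddCommGroup V₃]
    [Module K V₁] [Module K V₂] [Module K V₃]
    (f : V₁ →ₗ[K] V₂) (g : V₁ →ₗ[K] V₃) (h : LinearMap.ker f ≤ LinearMap.ker g) :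
    ∃ h' : V₂ →ₗ[K] V₃, g = h'.comp f := by
  obtain ⟨π, hπ⟩ := (LinearMap.range f).subtype.exists_leftInverse_of_injective
    (Submodule.ker_subtype _)
  refine ⟨((LinearMap.ker f).liftQ g h).comp
    ((f.quotKerEquivRange.symm : _ →ₗ[K] _).comp π), ?_⟩
  ext x
  have h1 : π (f x) = ⟨f x, LinearMap.mem_range_self f x⟩ := by
    have := LinearMap.congr_fun hπ ⟨f x, LinearMap.mem_range_self f x⟩
    simpa using this
  simp only [LinearMap.comp_apply, h1, LinearEquiv.coe_coe]
  rw [LinearMap.quotKerEquivRange_symm_apply_image]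
  simp

private lemma exists_add_smul_one_posSemidef {m : ℕ} (T : Matrix (Fin m) (Fin m) ℝ)
    (hT : T.IsSymm) : ∃ c : ℝ, (T + c • (1 : Matrix (Fin m) (Fin m) ℝ)).PosSemidef := by
  refine ⟨∑ i, ∑ j, |T i j|, posSemidef_iff_dotProduct_mulVec.mpr ⟨?_, ?_⟩⟩
  · unfold Matrix.IsHermitian
    rw [conjTranspose_eq_transpose_of_trivial, transpose_add, hT, transpose_smul, transpose_one]
  · intro x
    have hsx : ∀ i, x i * x i ≤ x ⬝ᵥ x := by
      intro i
      have : x i * x i ≤ ∑ k, x k * x k :=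
        Finset.single_le_sum (f := fun k => x k * x k)
          (fun k _ => mul_self_nonneg _) (Finset.mem_univ i)
      simpa [dotProduct] using this
    have hs0 : (0:ℝ) ≤ x ⬝ᵥ x := Finset.sum_nonneg fun k _ => mul_self_nonneg (x k)
    have key : 0 ≤ x ⬝ᵥ T.mulVec x + (∑ i, ∑ j, |T i j|) * (x ⬝ᵥ x) := by
      have h1 : x ⬝ᵥ T.mulVec x = ∑ i, ∑ j, x i * (T i j * x j) := by
        simp [dotProduct, Matrix.mulVec, Finset.mul_sum]
      rw [h1, Finset.sum_mul, ← Finset.sum_add_distrib]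
      refine Finset.sum_nonneg fun i _ => ?_
      rw [Finset.sum_mul, ← Finset.sum_add_distrib]
      refine Finset.sum_nonneg fun j _ => ?_
      have h2 := hsx i
      have h3 := hsx j
      nlinarith [le_abs_self (T i j), neg_abs_le (T i j), abs_nonneg (T i j),
        sq_nonneg (x i + x j), sq_nonneg (x i - x j)]
    simpa [Matrix.add_mulVec, dotProduct_add, Matrix.smul_mulVec, Matrix.one_mulVec,
      dotProduct_smul, smul_eq_mul, mul_comm] using key

private lemma psd_congr_iff {n : Type*} [Fintype n] [DecidableEq n]
    {P : Matrix n n ℝ} (hP : IsUnit P) (N : Matrix n n ℝ) :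
    (P * N * Pᵀ).PosSemidef ↔ N.PosSemidef := by
  have hdet : IsUnit P.det := (Matrix.isUnit_iff_isUnit_det P).mp hP
  constructor
  · intro h
    have := h.mul_mul_conjTranspose_same P⁻¹
    rw [conjTranspose_eq_transpose_of_trivial, Matrix.transpose_nonsing_inv] at this
    have e : P⁻¹ * (P * N * Pᵀ) * (Pᵀ)⁻¹ = N := by
      simp only [Matrix.mul_assoc]
      rw [Matrix.mul_nonsing_inv _ (by simpa using hdet), Matrix.mul_one,
        ← Matrix.mul_assoc, Matrix.nonsing_inv_mul _ hdet, Matrix.one_mul]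
    rwa [e] at this
  · intro h
    have := h.mul_mul_conjTranspose_same P
    rwa [conjTranspose_eq_transpose_of_trivial] at this

private lemma psd_fromBlocks_factor {d m : ℕ} {W : Matrix (Fin d) (Fin d) ℝ}
    (hW : W.PosSemidef) (B : Matrix (Fin d) (Fin m) ℝ) :
    (fromBlocks W (W * B) (Bᵀ * W) (Bᵀ * W * B)).PosSemidef := by
  have hWs : Wᵀ = W := by
    rw [← conjTranspose_eq_transpose_of_trivial]; exact hW.1
  refine posSemidef_iff_dotProduct_mulVec.mpr ⟨?_, ?_⟩
  · unfold Matrix.IsHermitian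
    rw [conjTranspose_eq_transpose_of_trivial, fromBlocks_transpose]
    congr 1 <;> simp [Matrix.transpose_mul, hWs, Matrix.mul_assoc]
  · intro v
    have hv : v = Sum.elim (v ∘ Sum.inl) (v ∘ Sum.inr) := by
      funext i; cases i <;> rfl
    set x := v ∘ Sum.inl
    set y := v ∘ Sum.inr
    have key : star v ⬝ᵥ (fromBlocks W (W * B) (Bᵀ * W) (Bᵀ * W * B)).mulVec v
        = (x + B.mulVec y) ⬝ᵥ W.mulVec (x + B.mulVec y) := by
      rw [show (star v : _ → ℝ) = v from rfl]
      conv_lhs => rw [hv]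
      rw [fromBlocks_mulVec, sumElim_dotProduct_sumElim]
      simp only [Sum.elim_comp_inl, Sum.elim_comp_inr, Matrix.mulVec_add, Matrix.add_mulVec,
        dotProduct_add, add_dotProduct, ← Matrix.mulVec_mulVec]
      have c1 : y ⬝ᵥ Bᵀ.mulVec (W.mulVec x) = B.mulVec y ⬝ᵥ W.mulVec x := by
        rw [dotProduct_mulVec, vecMul_transpose]
      have c2 : y ⬝ᵥ Bᵀ.mulVec (W.mulVec (B.mulVec y))
          = B.mulVec y ⬝ᵥ W.mulVec (B.mulVec y) := by
        rw [dotProduct_mulVec, vecMul_transpose]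
      have c3 : x ⬝ᵥ W.mulVec (B.mulVec y) = B.mulVec y ⬝ᵥ W.mulVec x := by
        rw [dotProduct_mulVec, ← hWs, vecMul_transpose, hWs, dotProduct_comm]
      rw [c1, c2, c3]
      try ring
    rw [key]
    exact hW.dotProduct_mulVec_nonneg _

private lemma psd_fromBlocks_zero {d m : ℕ} {D : Matrix (Fin m) (Fin m) ℝ}
    (hD : D.PosSemidef) :
    (fromBlocks (0 : Matrix (Fin d) (Fin d) ℝ) 0 0 D).PosSemidef := by
  refine posSemidef_iff_dotProduct_mulVec.mpr ⟨?_, ?_⟩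
  · unfold Matrix.IsHermitian
    rw [conjTranspose_eq_transpose_of_trivial, fromBlocks_transpose]
    have hDs : Dᵀ = D := by
      rw [← conjTranspose_eq_transpose_of_trivial]; exact hD.1
    simp [hDs]
  · intro v
    have hv : v = Sum.elim (v ∘ Sum.inl) (v ∘ Sum.inr) := by
      funext i; cases i <;> rfl
    have key : star v ⬝ᵥ (fromBlocks (0 : Matrix (Fin d) (Fin d) ℝ) 0 0 D).mulVec v
        = (v ∘ Sum.inr) ⬝ᵥ D.mulVec (v ∘ Sum.inr) := by
      rw [show (star v : _ → ℝ) = v from rfl]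
      conv_lhs => rw [hv]
      rw [fromBlocks_mulVec, sumElim_dotProduct_sumElim]
      simp
    rw [key]
    simpa using hD.dotProduct_mulVec_nonneg (v ∘ Sum.inr)

private lemma ker_le_of_psd {d m : ℕ} {W : Matrix (Fin d) (Fin d) ℝ}
    {Z : Matrix (Fin d) (Fin m) ℝ} {R' : Matrix (Fin m) (Fin m) ℝ}
    (h : (fromBlocks W Z Zᵀ R').PosSemidef) :
    LinearMap.ker W.mulVecLin ≤ LinearMap.ker Zᵀ.mulVecLin := by
  intro x hx
  have hWx : W.mulVec x = 0 := hx
  set y := Zᵀ.mulVec x with hy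
  set c := y ⬝ᵥ y with hcdef
  set b := y ⬝ᵥ R'.mulVec y with hbdef
  have hc0 : 0 ≤ c := Finset.sum_nonneg fun k _ => mul_self_nonneg (y k)
  have hb : 0 ≤ b := by
    have h2 := h.dotProduct_mulVec_nonneg (Sum.elim 0 y)
    have hstar : (star (Sum.elim (0 : Fin d → ℝ) y)) = Sum.elim (0 : Fin d → ℝ) y := rfl
    rw [hstar, fromBlocks_mulVec, sumElim_dotProduct_sumElim] at h2
    simp only [Sum.elim_comp_inl, Sum.elim_comp_inr] at h2
    simpa using h2
  have hform : ∀ t : ℝ, 0 ≤ 2 * t * c + t ^ 2 * b := by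
    intro t
    have h2 := h.dotProduct_mulVec_nonneg (Sum.elim x (t • y))
    have hstar : (star (Sum.elim x (t • y))) = Sum.elim x (t • y) := rfl
    rw [hstar, fromBlocks_mulVec, sumElim_dotProduct_sumElim] at h2
    simp only [Sum.elim_comp_inl, Sum.elim_comp_inr] at h2
    have e1 : x ⬝ᵥ (W.mulVec x + Z.mulVec (t • y)) = t * c := by
      rw [hWx, dotProduct_add, dotProduct_zero, Matrix.mulVec_smul, dotProduct_smul,
        dotProduct_mulVec, ← Matrix.mulVec_transpose, ← hy, smul_eq_mul, hcdef,
        dotProduct_comm]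
      ring
    have e2 : (t • y) ⬝ᵥ (Zᵀ.mulVec x + R'.mulVec (t • y)) = t * c + t ^ 2 * b := by
      rw [dotProduct_add, smul_dotProduct, ← hy, ← hcdef, Matrix.mulVec_smul,
        smul_dotProduct, dotProduct_smul, ← hbdef, smul_eq_mul, smul_eq_mul, smul_eq_mul]
      ring
    rw [e1, e2] at h2
    linarith
  have hb1 : (0:ℝ) < b + 1 := by linarith
  have h2 := hform (-c / (b + 1))
  have h3 : 2 * (-c / (b + 1)) * c + (-c / (b + 1)) ^ 2 * b = (-(c ^ 2) * (b + 2)) / (b + 1) ^ 2 := by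
    field_simp
    ring
  rw [h3] at h2
  have hb2 : (0:ℝ) < (b + 1) ^ 2 := by positivity
  have h5 : 0 ≤ -(c ^ 2) * (b + 2) := by
    have h6 := mul_nonneg h2 hb2.le
    rwa [div_mul_cancel₀ _ (ne_of_gt hb2)] at h6
  have hc : c = 0 := by nlinarith
  have hy0 : y = 0 := dotProduct_self_eq_zero.mp (by rw [← hcdef, hc])
  exact LinearMap.mem_ker.mpr (by rw [Matrix.mulVecLin_apply, ← hy, hy0])

theorem mem_psd_add_span_iff
    {d m : ℕ} (P : Matrix (Fin d ⊕ Fin m) (Fin d ⊕ Fin m) ℝ)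
    (hP : IsUnit P)
    (U : Matrix (Fin d ⊕ Fin m) (Fin d) ℝ)
    (V : Matrix (Fin d ⊕ Fin m) (Fin m) ℝ)
    (hU : ∀ i j, U i j = P i (Sum.inl j))
    (hV : ∀ i j, V i j = P i (Sum.inr j))
    (hUV : Uᵀ * V = 0)
    (S : Matrix (Fin d ⊕ Fin m) (Fin d ⊕ Fin m) ℝ)
    (hS : S = V * Vᵀ)
    (W : Matrix (Fin d) (Fin d) ℝ) (hW : W.PosSemidef)
    (Z : Matrix (Fin d) (Fin m) ℝ)
    (R : Matrix (Fin m) (Fin m) ℝ) (hR : R.IsSymm)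
    (X : Matrix (Fin d ⊕ Fin m) (Fin d ⊕ Fin m) ℝ)
    (hX : X = P * Matrix.fromBlocks W Z Zᵀ R * Pᵀ) :
    (∃ Y : Matrix (Fin d ⊕ Fin m) (Fin d ⊕ Fin m) ℝ, Y.PosSemidef ∧
        ∃ α : ℝ, X = Y + α • S) ↔
      LinearMap.ker W.mulVecLin ≤ LinearMap.ker Zᵀ.mulVecLin := by
  have hWs : Wᵀ = W := by
    rw [← conjTranspose_eq_transpose_of_trivial]; exact hW.1
  have hE : S = P * (fromBlocks 0 0 0 (1 : Matrix (Fin m) (Fin m) ℝ)) * Pᵀ := by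
    subst hS
    ext i k
    simp [Matrix.mul_apply, Fintype.sum_sum_type, Matrix.fromBlocks, hV, Finset.sum_mul,
      Matrix.one_apply, transpose_apply]
  have hXα : ∀ α : ℝ, X - α • S = P * (fromBlocks W Z Zᵀ (R - α • 1)) * Pᵀ := by
    intro α
    have hMα : fromBlocks W Z Zᵀ (R - α • (1 : Matrix (Fin m) (Fin m) ℝ))
        = fromBlocks W Z Zᵀ R - α • fromBlocks 0 0 0 1 := by
      rw [fromBlocks_smul, smul_zero, smul_zero, smul_zero]
      ext i j
      rcases i with i | i <;> rcases j with j | j <;> simp [Matrix.fromBlocks]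
    rw [hX, hE, hMα, Matrix.mul_sub, Matrix.sub_mul, mul_smul_comm, smul_mul_assoc]
  constructor
  · rintro ⟨Y, hY, α, hXY⟩
    have hYeq : Y = P * (fromBlocks W Z Zᵀ (R - α • 1)) * Pᵀ := by
      rw [← hXα α, hXY, add_sub_cancel_right]
    exact ker_le_of_psd ((psd_congr_iff hP _).mp (hYeq ▸ hY))
  · intro hker
    obtain ⟨h', hh'⟩ := exists_comp_of_ker_le_ker W.mulVecLin Zᵀ.mulVecLin hker
    set C := LinearMap.toMatrix' h' with hC
    have hCmul : C.mulVecLin = h' := by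
      rw [← Matrix.toLin'_apply', hC, Matrix.toLin'_toMatrix']
    have hZt : Zᵀ = C * W := by
      apply Matrix.toLin'.injective
      rw [Matrix.toLin'_apply', Matrix.toLin'_apply', Matrix.mulVecLin_mul, hCmul, hh']
    set B := Cᵀ with hB
    have hZ : Z = W * B := by
      rw [← transpose_transpose Z, hZt, transpose_mul, hWs, hB]
    set T := R - Bᵀ * W * B with hT
    have hTsymm : T.IsSymm := by
      unfold Matrix.IsSymm
      rw [hT, transpose_sub, hR, transpose_mul, transpose_mul, transpose_transpose, hWs,
        ← Matrix.mul_assoc]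
    obtain ⟨c, hc⟩ := exists_add_smul_one_posSemidef T hTsymm
    have hsplit : fromBlocks W Z Zᵀ (R - (-c) • 1)
        = fromBlocks W (W * B) (Bᵀ * W) (Bᵀ * W * B)
          + fromBlocks 0 0 0 (T + c • 1) := by
      rw [fromBlocks_add]
      have e2 : W * B + 0 = Z := by rw [add_zero, hZ]
      have e3 : Bᵀ * W + 0 = Zᵀ := by rw [add_zero, hZt, hB, transpose_transpose]
      have e4 : Bᵀ * W * B + (T + c • 1) = R - (-c) • (1 : Matrix (Fin m) (Fin m) ℝ) := by
        rw [hT, neg_smul, sub_neg_eq_add]; abel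
      rw [e2, e3, e4, add_zero]
    have hpsd : (fromBlocks W Z Zᵀ (R - (-c) • 1)).PosSemidef := by
      rw [hsplit]
      exact (psd_fromBlocks_factor hW B).add (psd_fromBlocks_zero hc)
    refine ⟨P * (fromBlocks W Z Zᵀ (R - (-c) • 1)) * Pᵀ, (psd_congr_iff hP _).mpr hpsd, -c, ?_⟩
    rw [← hXα (-c)]
    abel
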